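/- Let L be an SPS lattice, let c be a corner of L, and set L' = L \ {c}, a sublattice of L. If the Swing Lemma holds for L, then the Swing Lemma holds for L'. -/

import Mathlib

universe u

/-- A congruence of a lattice: an equivalence relation compatible with `⊔` and `⊓`. -/
structure LatCon (L : Type u) [Lattice L] : Type u where
  rel : L → L → Prop
  refl : ∀ a, rel a a
  symm : ∀ {a b}, rel a b → rel b a
  trans : ∀ {a b c}, rel a b → rel b c → rel a c
  sup_comp : ∀ {a b c d}, rel a b → rel c d → rel (a ⊔ c) (b ⊔ d)
  inf_comp : ∀ {a b c d}, rel a b → rel c d → rel (a ⊓ c) (b ⊓ d)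

variable {L : Type u} [Lattice L]

/-- The inclusion order on congruences. -/
def LatCon.le (α β : LatCon L) : Prop := ∀ a b : L, α.rel a b → β.rel a b

/-- The principal congruence `con(x, y)`: the smallest congruence collapsing `x` and `y`. -/
def conOf (x y : L) : LatCon L where
  rel a b := ∀ θ : LatCon L, θ.rel x y → θ.rel a b
  refl a := fun θ _ => θ.refl a
  symm h := fun θ hθ => θ.symm (h θ hθ)
  trans h₁ h₂ := fun θ hθ => θ.trans (h₁ θ hθ) (h₂ θ hθ)
  sup_comp h₁ h₂ := fun θ hθ => θ.sup_comp (h₁ θ hθ) (h₂ θ hθ)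
  inf_comp h₁ h₂ := fun θ hθ => θ.inf_comp (h₁ θ hθ) (h₂ θ hθ)

/-- The bottom congruence: equality. -/
def conBot : LatCon L where
  rel a b := a = b
  refl _ := rfl
  symm h := h.symm
  trans h₁ h₂ := h₁.trans h₂
  sup_comp h₁ h₂ := by rw [h₁, h₂]
  inf_comp h₁ h₂ := by rw [h₁, h₂]

/-- The join of two congruences: the smallest congruence containing both. -/
def conJoin (α β : LatCon L) : LatCon L where
  rel a b := ∀ θ : LatCon L, α.le θ → β.le θ → θ.rel a b
  refl a := fun θ _ _ => θ.refl a
  symm h := fun θ hα hβ => θ.symm (h θ hα hβ)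
  trans h₁ h₂ := fun θ hα hβ => θ.trans (h₁ θ hα hβ) (h₂ θ hα hβ)
  sup_comp h₁ h₂ := fun θ hα hβ => θ.sup_comp (h₁ θ hα hβ) (h₂ θ hα hβ)
  inf_comp h₁ h₂ := fun θ hα hβ => θ.inf_comp (h₁ θ hα hβ) (h₂ θ hα hβ)

/-- A congruence is join-irreducible if it is not the bottom congruence and is not
the join of two congruences unless it equals one of them. -/
def LatCon.JoinIrreducible (θ : LatCon L) : Prop :=
  θ ≠ conBot ∧ ∀ α β : LatCon L, θ = conJoin α β → θ = α ∨ θ = β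

/-- `p` is a prime interval: its bottom is covered by its top. -/
def IsPrimeInt (p : L × L) : Prop := p.1 ⋖ p.2

/-- `[a, b]` is perspective up to `[c, d]`: `b ⊔ c = d` and `a = b ⊓ c`. -/
def PerspUp (p q : L × L) : Prop := p.2 ⊔ q.1 = q.2 ∧ p.1 = p.2 ⊓ q.1

/-- `[a, b]` is perspective down to `[c, d]`: `a ⊓ d = c` and `a ⊔ d = b`. -/
def PerspDn (p q : L × L) : Prop := p.1 ⊓ q.2 = q.1 ∧ p.1 ⊔ q.2 = p.2

/-- Perspectivity: up or down. -/
def Persp (p q : L × L) : Prop := PerspUp p q ∨ PerspDn p q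

/-- `p` is prime-perspective down to `q`: `1_q ≤ 1_p`, `p` is perspective down onto the
interval `[0_p ⊓ 1_q, 1_q]` (i.e. `0_p ⊔ 1_q = 1_p`), and `q ⊆ [0_p ⊓ 1_q, 1_q]`
(i.e. `0_p ⊓ 1_q ≤ 0_q`). -/
def PPerspDn (p q : L × L) : Prop := q.2 ≤ p.2 ∧ p.1 ⊔ q.2 = p.2 ∧ p.1 ⊓ q.2 ≤ q.1

/-- `p` is prime-perspective up to `q`: the dual of `PPerspDn`. -/
def PPerspUp (p q : L × L) : Prop := p.1 ≤ q.1 ∧ p.2 ⊓ q.1 = p.1 ∧ q.2 ≤ p.2 ⊔ q.1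

/-- Prime-perspectivity: up or down. -/
def PPersp (p q : L × L) : Prop := PPerspUp p q ∨ PPerspDn p q

/-- Prime-projectivity: the reflexive-transitive extension of prime-perspectivity. -/
def PProj : (L × L) → (L × L) → Prop := Relation.ReflTransGen PPersp

/-- `q` is collapsed by `con(p)`. -/
def Collapses (p q : L × L) : Prop := (conOf p.1 p.2).rel q.1 q.2

/-- `{e, a, b, c, t}` forms a pentagon (`N₅`) sublattice:
`e < a < t`, `e < b < c < t`, with `a` a complement of both `b` and `c`. -/
def IsN5 (e a b c t : L) : Prop :=
  e < a ∧ a < t ∧ e < b ∧ b < c ∧ c < t ∧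
  a ⊓ b = e ∧ a ⊓ c = e ∧ a ⊔ b = t ∧ a ⊔ c = t

/-- `{e, a, b, t}` forms a sublattice isomorphic to the four-element Boolean lattice. -/
def IsBool4 (e a b t : L) : Prop :=
  a ⊓ b = e ∧ a ⊔ b = t ∧ ¬ a ≤ b ∧ ¬ b ≤ a

/-- `{e, a, b, t}` is a covering square `C₂²`. -/
def IsCovSquare (e a b t : L) : Prop :=
  a ⊓ b = e ∧ a ⊔ b = t ∧ e ⋖ a ∧ e ⋖ b ∧ a ⋖ t ∧ b ⋖ t

/-- `{e, a, b, c, t}` forms a diamond (`M₃`) sublattice. -/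
def IsM3 (e a b c t : L) : Prop :=
  a ⊓ b = e ∧ a ⊓ c = e ∧ b ⊓ c = e ∧ a ⊔ b = t ∧ a ⊔ c = t ∧ b ⊔ c = t ∧
  e < a ∧ e < b ∧ e < c ∧ a ≠ b ∧ a ≠ c ∧ b ≠ c

/-- A lattice is slim if it contains no `M₃` sublattice. -/
def Slim (L : Type u) [Lattice L] : Prop := ¬ ∃ e a b c t : L, IsM3 e a b c t

/-- (Upper) semimodularity: `a ⊓ b ⋖ a` implies `b ⋖ a ⊔ b`. -/
def Semimodular (L : Type u) [Lattice L] : Prop := ∀ a b : L, a ⊓ b ⋖ a → b ⋖ a ⊔ b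

/-- A planar diagram of a finite lattice: every element gets a position in the plane,
the vertical coordinate is strictly order-preserving, distinct elements get distinct
positions, and the straight-line edges of distinct covering pairs do not cross. -/
structure Diagram (L : Type u) [Lattice L] where
  x : L → ℚ
  y : L → ℚ
  y_strictMono : ∀ {a b : L}, a < b → y a < y b
  inj : Function.Injective fun v => (x v, y v)
  planar : ∀ a b c d : L, a ⋖ b → c ⋖ d →
    (openSegment ℚ ((x a, y a) : ℚ × ℚ) (x b, y b) ∩
      openSegment ℚ ((x c, y c) : ℚ × ℚ) (x d, y d)).Nonempty → a = c ∧ b = d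

/-- In the diagram `D`, the prime interval `p` swings to the prime interval `q`:
they share the same top, that top covers at least three elements, and `0_q` is
neither the left-most nor the right-most lower cover of the common top. -/
def Swing (D : Diagram L) (p q : L × L) : Prop :=
  p.2 = q.2 ∧ 3 ≤ Nat.card {z : L // z ⋖ p.2} ∧
  (¬ ∀ z : L, z ⋖ p.2 → D.x q.1 ≤ D.x z) ∧ (¬ ∀ z : L, z ⋖ p.2 → D.x z ≤ D.x q.1)

/-- The conclusion of the Swing Lemma for prime intervals `p`, `q`: there are pairwise
distinct prime intervals `r = r₀, …, rₙ = q` with `p` perspective up to `r` and each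
`rᵢ` perspective down to, or swinging to, `r_{i+1}`. -/
def SwingSeq (D : Diagram L) (p q : L × L) : Prop :=
  ∃ (n : ℕ) (r : Fin (n + 1) → L × L), Function.Injective r ∧
    (∀ i, IsPrimeInt (r i)) ∧ PerspUp p (r 0) ∧ r (Fin.last n) = q ∧
    ∀ i : Fin n, PerspDn (r i.castSucc) (r i.succ) ∨ Swing D (r i.castSucc) (r i.succ)

/-- The Swing Lemma holds for the lattice `L` with planar diagram `D`. -/
def SwingLemmaHolds (L : Type u) [Lattice L] (D : Diagram L) : Prop :=
  ∀ p q : L × L, IsPrimeInt p → IsPrimeInt q → p ≠ q →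
    (Collapses p q ↔ SwingSeq D p q)

/-- A corner of a finite lattice: a doubly irreducible element, distinct from the
extremes, whose unique upper cover covers exactly two elements and whose unique
lower cover is covered by exactly two elements. -/
def IsLatCorner (c : L) : Prop :=
  ¬ IsMin c ∧ ¬ IsMax c ∧ (∃! u : L, c ⋖ u) ∧ (∃! v : L, v ⋖ c) ∧
  (∀ u : L, c ⋖ u → Nat.card {z : L // z ⋖ u} = 2) ∧
  (∀ v : L, v ⋖ c → Nat.card {z : L // v ⋖ z} = 2)

set_option linter.unusedSectionVars false
namespace SLRC
variable {L : Type u} [Lattice L] [Fintype L]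

/-- Data of a corner: `cm ⋖ c ⋖ cs`, with companion `d`. -/
structure Corner (c cm cs d : L) : Prop where
  covm : cm ⋖ c
  covs : c ⋖ cs
  covmd : cm ⋖ d
  covds : d ⋖ cs
  dnec : d ≠ c
  lc : ∀ z : L, z ⋖ c → z = cm
  uc : ∀ z : L, c ⋖ z → z = cs
  lcs : ∀ z : L, z ⋖ cs → z = c ∨ z = d
  ucm : ∀ z : L, cm ⋖ z → z = c ∨ z = d
  two_lcs : Nat.card {z : L // z ⋖ cs} = 2

namespace Corner
variable {c cm cs d : L} (hc : Corner c cm cs d)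
include hc

lemma le_cm_of_lt {x : L} (h : x < c) : x ≤ cm := by
  obtain ⟨z, hz1, hz2⟩ := exists_le_covBy_of_lt h
  exact hc.lc z hz2 ▸ hz1

lemma cs_le_of_lt {x : L} (h : c < x) : cs ≤ x := by
  obtain ⟨z, hz1, hz2⟩ := exists_covBy_le_of_lt h
  exact hc.uc z hz1 ▸ hz2

lemma le_cm_iff {x : L} (hx : x ≠ c) : x ≤ c ↔ x ≤ cm :=
  ⟨fun h => hc.le_cm_of_lt (lt_of_le_of_ne h hx),
   fun h => h.trans hc.covm.le⟩

lemma jirr {a b : L} (ha : a ≠ c) (hb : b ≠ c) : a ⊔ b ≠ c := by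
  intro h
  have ha' : a ≤ cm := (hc.le_cm_iff ha).1 (h ▸ le_sup_left)
  have hb' : b ≤ cm := (hc.le_cm_iff hb).1 (h ▸ le_sup_right)
  exact absurd (h ▸ sup_le ha' hb') (not_le_of_gt hc.covm.lt)

lemma cs_le_iff {x : L} (hx : x ≠ c) : c ≤ x ↔ cs ≤ x :=
  ⟨fun h => hc.cs_le_of_lt (lt_of_le_of_ne h (Ne.symm hx)),
   fun h => hc.covs.le.trans h⟩

lemma mirr {a b : L} (ha : a ≠ c) (hb : b ≠ c) : a ⊓ b ≠ c := by
  intro h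
  have ha' : cs ≤ a := (hc.cs_le_iff ha).1 (h ▸ inf_le_left)
  have hb' : cs ≤ b := (hc.cs_le_iff hb).1 (h ▸ inf_le_right)
  exact absurd (h ▸ le_inf ha' hb') (not_le_of_gt hc.covs.lt)

/-- Key lemma (J): anything strictly above `cm` other than `c` is above `d`. -/
lemma d_le {u : L} (h : cm < u) (hu : u ≠ c) : d ≤ u := by
  obtain ⟨z, hz1, hz2⟩ := exists_covBy_le_of_lt h
  rcases hc.ucm z hz1 with rfl | rfl
  · exact (hc.covds.le).trans (hc.cs_le_of_lt (lt_of_le_of_ne hz2 (Ne.symm hu)))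
  · exact hz2

/-- Key lemma (M): anything strictly below `cs` other than `c` is below `d`. -/
lemma le_d {v : L} (h : v < cs) (hv : v ≠ c) : v ≤ d := by
  obtain ⟨z, hz1, hz2⟩ := exists_le_covBy_of_lt h
  rcases hc.lcs z hz2 with rfl | rfl
  · exact (hc.le_cm_of_lt (lt_of_le_of_ne hz1 hv)).trans hc.covmd.le
  · exact hz1

lemma cmnec : cm ≠ c := hc.covm.ne
lemma csnec : cs ≠ c := hc.covs.ne'

lemma sup_c_of_le {b : L} (h : b ≤ cm) : b ⊔ c = c :=
  sup_eq_right.2 (h.trans hc.covm.le)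

lemma sup_c_eq {b : L} (hb : b ≠ c) (h : ¬ b ≤ cm) : b ⊔ c = b ⊔ cs := by
  have h1 : c < b ⊔ c := by
    rcases (le_sup_right : c ≤ b ⊔ c).lt_or_eq with h' | h'
    · exact h'
    · exact absurd ((hc.le_cm_iff hb).1 (h' ▸ le_sup_left)) h
  exact le_antisymm (sup_le le_sup_left (hc.covs.le.trans le_sup_right))
    (sup_le le_sup_left (hc.cs_le_of_lt h1))

lemma inf_c_of_le {b : L} (h : cs ≤ b) : b ⊓ c = c :=
  inf_eq_right.2 (hc.covs.le.trans h)

lemma inf_c_eq {b : L} (hb : b ≠ c) (h : ¬ cs ≤ b) : b ⊓ c = b ⊓ cm := by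
  have h1 : b ⊓ c < c := by
    rcases (inf_le_right : b ⊓ c ≤ c).lt_or_eq with h' | h'
    · exact h'
    · exact absurd ((hc.cs_le_iff hb).1 (h' ▸ inf_le_left)) h
  exact le_antisymm (le_inf inf_le_left (hc.le_cm_of_lt h1))
    (le_inf inf_le_left (inf_le_right.trans hc.covm.le))

/-- `cm ⊔ b = d ⊔ b` for `b ≠ c` not below `cm`. -/
lemma sup_cm_eq_sup_d {b : L} (hb : b ≠ c) (h : ¬ b ≤ cm) : cm ⊔ b = d ⊔ b := by
  have h1 : cm < cm ⊔ b := lt_of_le_of_ne le_sup_left (by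
    intro h'; exact h (le_sup_right.trans h'.symm.le))
  have h2 : d ≤ cm ⊔ b := hc.d_le h1 (hc.jirr hc.cmnec hb)
  exact le_antisymm (sup_le (hc.covmd.le.trans le_sup_left) le_sup_right)
    (sup_le h2 le_sup_right)

/-- dual of sup_cm_eq_sup_d -/
lemma inf_cs_eq_inf_d {b : L} (hb : b ≠ c) (h : ¬ cs ≤ b) : cs ⊓ b = d ⊓ b := by
  have h1 : cs ⊓ b < cs := lt_of_le_of_ne inf_le_left (by
    intro h'; exact h (h'.symm.le.trans inf_le_right))
  have h2 : cs ⊓ b ≤ d := hc.le_d h1 (hc.mirr hc.csnec hb)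
  exact le_antisymm (le_inf h2 inf_le_right)
    (inf_le_inf_right b hc.covds.le)

lemma card_three_absurd {t : L} (hcard : 3 ≤ Nat.card {z : L // z ⋖ t})
    (huniq : ∀ z : L, z ⋖ t → z = cm) : False := by
  have hnt : Nontrivial {z : L // z ⋖ t} :=
    Finite.one_lt_card_iff_nontrivial.mp (by omega)
  obtain ⟨a, b, hab⟩ := hnt
  exact hab (Subtype.ext ((huniq a a.2).trans (huniq b b.2).symm))

end Corner

lemma corner_exists {c : L} (hsm : Semimodular L) (hc : IsLatCorner c) :
    ∃ cm cs d : L, Corner c cm cs d := by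
  obtain ⟨hmin, hmax, ⟨cs, hcs, hcsu⟩, ⟨cm, hcm, hcmu⟩, h2u, h2l⟩ := hc
  have hcard := h2u cs hcs
  rw [Nat.card_eq_two_iff' (⟨c, hcs⟩ : {z : L // z ⋖ cs})] at hcard
  obtain ⟨y, hy, hyu⟩ := hcard
  have hcard2 := h2l cm hcm
  rw [Nat.card_eq_two_iff' (⟨c, hcm⟩ : {z : L // cm ⋖ z})] at hcard2
  obtain ⟨w, hw, hwu⟩ := hcard2
  have hynec : (y : L) ≠ c := fun h => hy (Subtype.ext h)
  have hwnec : (w : L) ≠ c := fun h => hw (Subtype.ext h)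
  -- c ⊓ w = cm
  have hnotlt : ¬ c < (w : L) := w.2.2 hcm.lt
  have hinf : c ⊓ (w : L) = cm := by
    have h1 : cm ≤ c ⊓ (w:L) := le_inf hcm.le w.2.le
    have h2 : c ⊓ (w:L) < c := lt_of_le_of_ne inf_le_left (by
      intro h'
      exact hnotlt (lt_of_le_of_ne (by simpa using h'.symm.le.trans inf_le_right)
        (fun hh => hwnec hh.symm)))
    obtain ⟨z, hz1, hz2⟩ := exists_le_covBy_of_lt h2
    exact le_antisymm (hcmu z hz2 ▸ hz1) h1
  -- semimodularity both ways
  have hsm1 : c ⋖ (w:L) ⊔ c := by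
    have := hsm (w:L) c (by rw [inf_comm (w:L) c, hinf]; exact w.2)
    rwa [] at this
  have hsup : c ⊔ (w:L) = cs := by
    rw [sup_comm]; exact hcsu _ hsm1
  have hsm2 : (w:L) ⋖ cs := by
    have := hsm c (w:L) (by rwa [hinf])
    rwa [hsup] at this
  -- w = y
  have hwy : (w : L) = (y : L) := by
    have : (⟨(w:L), hsm2⟩ : {z : L // z ⋖ cs}) ≠ ⟨c, hcs⟩ := by
      intro h ; exact hwnec (congrArg Subtype.val h)
    have := hyu ⟨(w:L), hsm2⟩ this
    exact congrArg Subtype.val this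
  refine ⟨cm, cs, (w:L), ?_, hcs, ?_, hsm2, hwnec, fun z hz => hcmu z hz,
    fun z hz => hcsu z hz, ?_, ?_, h2u cs hcs⟩
  · exact hcm
  · exact w.2
  · intro z hz
    by_cases h : z = c
    · exact Or.inl h
    · right
      have : (⟨z, hz⟩ : {z : L // z ⋖ cs}) ≠ ⟨c, hcs⟩ := fun hh => h (congrArg Subtype.val hh)
      have := hyu ⟨z, hz⟩ this
      rw [hwy]; exact congrArg Subtype.val this
  · intro z hz
    by_cases h : z = c
    · exact Or.inl h
    · right
      have : (⟨z, hz⟩ : {z : L // cm ⋖ z}) ≠ ⟨c, hcm⟩ := fun hh => h (congrArg Subtype.val hh)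
      have := hwu ⟨z, hz⟩ this
      exact congrArg Subtype.val this

section Sub
variable {L : Type u} [Lattice L] [Fintype L] {c cm cs d : L} {S : Sublattice L}

lemma memS (hS : (S : Set L) = {x : L | x ≠ c}) {x : L} (hx : x ≠ c) : x ∈ S := by
  rw [← SetLike.mem_coe, hS]; exact hx

lemma neS (hS : (S : Set L) = {x : L | x ≠ c}) (x : ↥S) : (x : L) ≠ c := by
  have hx : (x : L) ∈ (S : Set L) := x.2
  rwa [hS] at hx

/-- Transport of a congruence on `S` to a partial relation on `L`. -/
def Tr (hS : (S : Set L) = {x : L | x ≠ c}) (θ : LatCon ↥S) (a b : L) : Prop :=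
  ∃ (ha : a ≠ c) (hb : b ≠ c), θ.rel ⟨a, memS hS ha⟩ ⟨b, memS hS hb⟩

variable (hS : (S : Set L) = {x : L | x ≠ c}) (θ : LatCon ↥S)

lemma Tr.ne1 {a b : L} (h : Tr hS θ a b) : a ≠ c := h.1
lemma Tr.ne2 {a b : L} (h : Tr hS θ a b) : b ≠ c := h.2.1

lemma Tsym {a b : L} (h : Tr hS θ a b) : Tr hS θ b a :=
  ⟨h.2.1, h.1, θ.symm h.2.2⟩

lemma Ttrans {a b e : L} (h : Tr hS θ a b) (h' : Tr hS θ b e) : Tr hS θ a e :=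
  ⟨h.1, h'.2.1, θ.trans h.2.2 h'.2.2⟩

lemma Trefl {a : L} (ha : a ≠ c) : Tr hS θ a a := ⟨ha, ha, θ.refl _⟩

variable (hc : Corner c cm cs d)

include hc in
lemma Tsup {a b x : L} (h : Tr hS θ a b) (hx : x ≠ c) : Tr hS θ (a ⊔ x) (b ⊔ x) :=
  ⟨hc.jirr h.1 hx, hc.jirr h.2.1 hx, θ.sup_comp h.2.2 (θ.refl ⟨x, memS hS hx⟩)⟩

include hc in
lemma Tinf {a b x : L} (h : Tr hS θ a b) (hx : x ≠ c) : Tr hS θ (a ⊓ x) (b ⊓ x) :=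
  ⟨hc.mirr h.1 hx, hc.mirr h.2.1 hx, θ.inf_comp h.2.2 (θ.refl ⟨x, memS hS hx⟩)⟩

/-- a `Tr`-congruence class for `c`, relating `c` to `x`. -/
def Qr (x : L) : Prop :=
  (Tr hS θ d cs ∧ Tr hS θ cm x) ∨ (Tr hS θ cm d ∧ Tr hS θ cs x)

lemma Qr.ne {x : L} (h : Qr hS θ (cm := cm) (cs := cs) (d := d) x) : x ≠ c := by
  rcases h with ⟨_, h⟩ | ⟨_, h⟩ <;> exact h.ne2

/-- The extended congruence relation on `L`. -/
def Er (a b : L) : Prop :=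
  (a = c ∧ b = c) ∨ (a = c ∧ Qr hS θ (cm := cm) (cs := cs) (d := d) b) ∨
  (b = c ∧ Qr hS θ (cm := cm) (cs := cs) (d := d) a) ∨ Tr hS θ a b

lemma Erefl (a : L) : Er hS θ (cm := cm) (cs := cs) (d := d) a a := by
  by_cases h : a = c
  · exact Or.inl ⟨h, h⟩
  · exact Or.inr (Or.inr (Or.inr (Trefl hS θ h)))

lemma Esymm {a b : L} (h : Er hS θ (cm := cm) (cs := cs) (d := d) a b) :
    Er hS θ (cm := cm) (cs := cs) (d := d) b a := by
  rcases h with ⟨h1, h2⟩ | ⟨h1, h2⟩ | ⟨h1, h2⟩ | h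
  · exact Or.inl ⟨h2, h1⟩
  · exact Or.inr (Or.inr (Or.inl ⟨h1, h2⟩))
  · exact Or.inr (Or.inl ⟨h1, h2⟩)
  · exact Or.inr (Or.inr (Or.inr (Tsym hS θ h)))

lemma Qtrans {b e : L} (hb : Qr hS θ (cm := cm) (cs := cs) (d := d) b)
    (h : Tr hS θ b e) : Qr hS θ (cm := cm) (cs := cs) (d := d) e := by
  rcases hb with ⟨h1, h2⟩ | ⟨h1, h2⟩
  · exact Or.inl ⟨h1, Ttrans hS θ h2 h⟩
  · exact Or.inr ⟨h1, Ttrans hS θ h2 h⟩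

lemma QQ_T {a e : L} (ha : Qr hS θ (cm := cm) (cs := cs) (d := d) a)
    (he : Qr hS θ (cm := cm) (cs := cs) (d := d) e) : Tr hS θ a e := by
  rcases ha with ⟨h1, h2⟩ | ⟨h1, h2⟩ <;> rcases he with ⟨h1', h2'⟩ | ⟨h1', h2'⟩
  · exact Ttrans hS θ (Tsym hS θ h2) h2'
  · exact Ttrans hS θ (Tsym hS θ h2) (Ttrans hS θ (Ttrans hS θ h1' h1) h2')
  · exact Ttrans hS θ (Tsym hS θ h2) (Ttrans hS θ (Tsym hS θ (Ttrans hS θ h1 h1')) h2')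
  · exact Ttrans hS θ (Tsym hS θ h2) h2'

lemma Etrans {a b e : L} (h1 : Er hS θ (cm := cm) (cs := cs) (d := d) a b)
    (h2 : Er hS θ (cm := cm) (cs := cs) (d := d) b e) :
    Er hS θ (cm := cm) (cs := cs) (d := d) a e := by
  rcases h1 with ⟨g1, g2⟩ | ⟨g1, g2⟩ | ⟨g1, g2⟩ | g <;>
    rcases h2 with ⟨f1, f2⟩ | ⟨f1, f2⟩ | ⟨f1, f2⟩ | f
  · exact Or.inl ⟨g1, f2⟩
  · exact Or.inr (Or.inl ⟨g1, f2⟩)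
  · exact absurd g2 (f2.ne hS θ)
  · exact absurd g2 f.ne1
  · exact absurd f1 (g2.ne hS θ)
  · exact absurd f1 (g2.ne hS θ)
  · exact Or.inl ⟨g1, f1⟩
  · exact Or.inr (Or.inl ⟨g1, Qtrans hS θ g2 f⟩)
  · exact Or.inr (Or.inr (Or.inl ⟨f2, g2⟩))
  · exact Or.inr (Or.inr (Or.inr (QQ_T hS θ g2 f2)))
  · exact absurd g1 (f2.ne hS θ)
  · exact absurd g1 f.ne1
  · exact absurd f1 g.ne2
  · exact absurd f1 g.ne2
  · exact Or.inr (Or.inr (Or.inl ⟨f1, Qtrans hS θ f2 (Tsym hS θ g)⟩))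
  · exact Or.inr (Or.inr (Or.inr (Ttrans hS θ g f)))

end Sub

section Sub2
variable {L : Type u} [Lattice L] [Fintype L] {c cm cs d : L} {S : Sublattice L}
variable (hS : (S : Set L) = {x : L | x ≠ c}) (θ : LatCon ↥S) (hc : Corner c cm cs d)

include hS hc

lemma beta_of {u : L} (hlt : cm < u) (h : Tr hS θ cm u) : Tr hS θ cm d := by
  have hdu : d ≤ u := hc.d_le hlt h.ne2
  have h2 := Tinf hS θ hc h hc.dnec
  rwa [inf_eq_left.2 hc.covmd.le, inf_eq_right.2 hdu] at h2

lemma alpha_of {v : L} (hlt : v < cs) (h : Tr hS θ cs v) : Tr hS θ d cs := by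
  have hvd : v ≤ d := hc.le_d hlt h.ne2
  have h2 := Tsup hS θ hc h hc.dnec
  rw [sup_eq_left.2 hc.covds.le, sup_eq_right.2 hvd] at h2
  exact Tsym hS θ h2

lemma Qmk_of_T {a b : L} (h : Tr hS θ a b) (hacm : a ≤ cm) (hbcm : ¬ b ≤ cm) :
    Qr hS θ (cm := cm) (cs := cs) (d := d) (b ⊔ cs) := by
  refine Or.inr ⟨?_, ?_⟩
  · have h1 := Tsup hS θ hc h hc.cmnec
    rw [sup_eq_right.2 hacm] at h1
    exact beta_of hS θ hc (right_lt_sup.2 hbcm) h1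
  · have h2 := Tsup hS θ hc h hc.csnec
    rwa [sup_eq_right.2 (hacm.trans (hc.covm.le.trans hc.covs.le))] at h2

lemma EsupT {a b : L} (h : Tr hS θ a b) (x : L) :
    Er hS θ (cm := cm) (cs := cs) (d := d) (a ⊔ x) (b ⊔ x) := by
  by_cases hx : x = c
  · subst hx
    by_cases ha : a ≤ cm <;> by_cases hb : b ≤ cm
    · rw [hc.sup_c_of_le ha, hc.sup_c_of_le hb]; exact Or.inl ⟨rfl, rfl⟩
    · rw [hc.sup_c_of_le ha, hc.sup_c_eq h.ne2 hb]
      exact Or.inr (Or.inl ⟨rfl, Qmk_of_T hS θ hc h ha hb⟩)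
    · rw [hc.sup_c_eq h.ne1 ha, hc.sup_c_of_le hb]
      exact Or.inr (Or.inr (Or.inl ⟨rfl, Qmk_of_T hS θ hc (Tsym hS θ h) hb ha⟩))
    · rw [hc.sup_c_eq h.ne1 ha, hc.sup_c_eq h.ne2 hb]
      exact Or.inr (Or.inr (Or.inr (Tsup hS θ hc h hc.csnec)))
  · exact Or.inr (Or.inr (Or.inr (Tsup hS θ hc h hx)))

lemma EsupQ {b : L} (hb : Qr hS θ (cm := cm) (cs := cs) (d := d) b) (x : L) :
    Er hS θ (cm := cm) (cs := cs) (d := d) (c ⊔ x) (b ⊔ x) := by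
  have hbne : b ≠ c := hb.ne hS θ
  by_cases hx : x = c
  · subst hx
    rw [sup_idem]
    by_cases hbcm : b ≤ cm
    · rw [hc.sup_c_of_le hbcm]; exact Or.inl ⟨rfl, rfl⟩
    · rw [hc.sup_c_eq hbne hbcm]
      refine Or.inr (Or.inl ⟨rfl, ?_⟩)
      rcases hb with ⟨h1, h2⟩ | ⟨h1, h2⟩
      · refine Or.inr ⟨?_, ?_⟩
        · have h3 := Tsup hS θ hc h2 hc.cmnec
          rw [sup_idem] at h3
          exact beta_of hS θ hc (right_lt_sup.2 hbcm) h3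
        · have h4 := Tsup hS θ hc h2 hc.csnec
          rwa [sup_eq_right.2 (hc.covm.le.trans hc.covs.le)] at h4
      · refine Or.inr ⟨h1, ?_⟩
        have h4 := Tsup hS θ hc h2 hc.csnec
        rwa [sup_idem] at h4
  · by_cases hxcm : x ≤ cm
    · rw [sup_eq_left.2 (hxcm.trans hc.covm.le)]
      refine Or.inr (Or.inl ⟨rfl, ?_⟩)
      rcases hb with ⟨h1, h2⟩ | ⟨h1, h2⟩
      · refine Or.inl ⟨h1, ?_⟩
        have h3 := Tsup hS θ hc h2 hx
        rwa [sup_eq_left.2 hxcm] at h3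
      · refine Or.inr ⟨h1, ?_⟩
        have h3 := Tsup hS θ hc h2 hx
        rwa [sup_eq_left.2 (hxcm.trans (hc.covm.le.trans hc.covs.le))] at h3
    · have hcx : c ⊔ x = cs ⊔ x := by
        rw [sup_comm c x, sup_comm cs x]; exact hc.sup_c_eq hx hxcm
      rw [hcx]
      refine Or.inr (Or.inr (Or.inr ?_))
      rcases hb with ⟨h1, h2⟩ | ⟨h1, h2⟩
      · have h3 := Tsup hS θ hc h2 hx
        have h4 := Tsup hS θ hc h1 hx
        rw [hc.sup_cm_eq_sup_d hx hxcm] at h3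
        exact Ttrans hS θ (Tsym hS θ h4) h3
      · exact Tsup hS θ hc h2 hx

lemma key_sup {a b : L} (h : Er hS θ (cm := cm) (cs := cs) (d := d) a b) (x : L) :
    Er hS θ (cm := cm) (cs := cs) (d := d) (a ⊔ x) (b ⊔ x) := by
  rcases h with ⟨h1, h2⟩ | ⟨h1, h2⟩ | ⟨h1, h2⟩ | h
  · subst h1; subst h2; exact Erefl hS θ _
  · subst h1; exact EsupQ hS θ hc h2 x
  · subst h1; exact Esymm hS θ (EsupQ hS θ hc h2 x)
  · exact EsupT hS θ hc h x

lemma Qmk_of_T_inf {a b : L} (h : Tr hS θ a b) (hacs : cs ≤ a) (hbcs : ¬ cs ≤ b) :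
    Qr hS θ (cm := cm) (cs := cs) (d := d) (b ⊓ cm) := by
  refine Or.inl ⟨?_, ?_⟩
  · have h1 := Tinf hS θ hc h hc.csnec
    rw [inf_eq_right.2 hacs] at h1
    exact alpha_of hS θ hc (inf_lt_right.2 hbcs) h1
  · have h2 := Tinf hS θ hc h hc.cmnec
    rwa [inf_eq_right.2 ((hc.covm.le.trans hc.covs.le).trans hacs)] at h2

lemma EinfT {a b : L} (h : Tr hS θ a b) (x : L) :
    Er hS θ (cm := cm) (cs := cs) (d := d) (a ⊓ x) (b ⊓ x) := by
  by_cases hx : x = c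
  · subst hx
    by_cases ha : cs ≤ a <;> by_cases hb : cs ≤ b
    · rw [hc.inf_c_of_le ha, hc.inf_c_of_le hb]; exact Or.inl ⟨rfl, rfl⟩
    · rw [hc.inf_c_of_le ha, hc.inf_c_eq h.ne2 hb]
      exact Or.inr (Or.inl ⟨rfl, Qmk_of_T_inf hS θ hc h ha hb⟩)
    · rw [hc.inf_c_eq h.ne1 ha, hc.inf_c_of_le hb]
      exact Or.inr (Or.inr (Or.inl ⟨rfl, Qmk_of_T_inf hS θ hc (Tsym hS θ h) hb ha⟩))
    · rw [hc.inf_c_eq h.ne1 ha, hc.inf_c_eq h.ne2 hb]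
      exact Or.inr (Or.inr (Or.inr (Tinf hS θ hc h hc.cmnec)))
  · exact Or.inr (Or.inr (Or.inr (Tinf hS θ hc h hx)))

lemma EinfQ {b : L} (hb : Qr hS θ (cm := cm) (cs := cs) (d := d) b) (x : L) :
    Er hS θ (cm := cm) (cs := cs) (d := d) (c ⊓ x) (b ⊓ x) := by
  have hbne : b ≠ c := hb.ne hS θ
  by_cases hx : x = c
  · subst hx
    rw [inf_idem]
    by_cases hbcs : cs ≤ b
    · rw [hc.inf_c_of_le hbcs]; exact Or.inl ⟨rfl, rfl⟩
    · rw [hc.inf_c_eq hbne hbcs]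
      refine Or.inr (Or.inl ⟨rfl, ?_⟩)
      rcases hb with ⟨h1, h2⟩ | ⟨h1, h2⟩
      · refine Or.inl ⟨h1, ?_⟩
        have h3 := Tinf hS θ hc h2 hc.cmnec
        rwa [inf_idem] at h3
      · refine Or.inl ⟨?_, ?_⟩
        · have h3 := Tinf hS θ hc h2 hc.csnec
          rw [inf_idem] at h3
          exact alpha_of hS θ hc (inf_lt_right.2 hbcs) h3
        · have h4 := Tinf hS θ hc h2 hc.cmnec
          rwa [inf_eq_right.2 (hc.covm.le.trans hc.covs.le)] at h4
  · by_cases hxcs : cs ≤ x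
    · rw [inf_eq_left.2 (hc.covs.le.trans hxcs)]
      refine Or.inr (Or.inl ⟨rfl, ?_⟩)
      rcases hb with ⟨h1, h2⟩ | ⟨h1, h2⟩
      · refine Or.inl ⟨h1, ?_⟩
        have h3 := Tinf hS θ hc h2 hx
        rwa [inf_eq_left.2 ((hc.covm.le.trans hc.covs.le).trans hxcs)] at h3
      · refine Or.inr ⟨h1, ?_⟩
        have h3 := Tinf hS θ hc h2 hx
        rwa [inf_eq_left.2 hxcs] at h3
    · have hcx : c ⊓ x = cm ⊓ x := by
        rw [inf_comm c x, inf_comm cm x]; exact hc.inf_c_eq hx hxcs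
      rw [hcx]
      refine Or.inr (Or.inr (Or.inr ?_))
      rcases hb with ⟨h1, h2⟩ | ⟨h1, h2⟩
      · exact Tinf hS θ hc h2 hx
      · have h3 := Tinf hS θ hc h2 hx
        have h4 := Tinf hS θ hc h1 hx
        rw [hc.inf_cs_eq_inf_d hx hxcs] at h3
        exact Ttrans hS θ h4 h3

lemma key_inf {a b : L} (h : Er hS θ (cm := cm) (cs := cs) (d := d) a b) (x : L) :
    Er hS θ (cm := cm) (cs := cs) (d := d) (a ⊓ x) (b ⊓ x) := by
  rcases h with ⟨h1, h2⟩ | ⟨h1, h2⟩ | ⟨h1, h2⟩ | h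
  · subst h1; subst h2; exact Erefl hS θ _
  · subst h1; exact EinfQ hS θ hc h2 x
  · subst h1; exact Esymm hS θ (EinfQ hS θ hc h2 x)
  · exact EinfT hS θ hc h x

/-- Extension of a congruence on `S` to all of `L`. -/
def extendCon : LatCon L where
  rel := Er hS θ (cm := cm) (cs := cs) (d := d)
  refl := Erefl hS θ
  symm h := Esymm hS θ h
  trans h1 h2 := Etrans hS θ h1 h2
  sup_comp {a b x y} h1 h2 := by
    have k1 := key_sup hS θ hc h1 x
    have k2 := key_sup hS θ hc h2 b
    rw [sup_comm x b, sup_comm y b] at k2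
    exact Etrans hS θ k1 k2
  inf_comp {a b x y} h1 h2 := by
    have k1 := key_inf hS θ hc h1 x
    have k2 := key_inf hS θ hc h2 b
    rw [inf_comm x b, inf_comm y b] at k2
    exact Etrans hS θ k1 k2

omit hc in
/-- Restriction of a congruence on `L` to `S`. -/
def LatCon.restrictS (θ' : LatCon L) : LatCon ↥S where
  rel a b := θ'.rel a b
  refl a := θ'.refl a
  symm h := θ'.symm h
  trans h1 h2 := θ'.trans h1 h2
  sup_comp h1 h2 := θ'.sup_comp h1 h2
  inf_comp h1 h2 := θ'.inf_comp h1 h2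

omit hS hc in
lemma collapses_up {p q : ↥S × ↥S} (h : Collapses p q) :
    Collapses ((p.1 : L), (p.2 : L)) ((q.1 : L), (q.2 : L)) := fun θ' hθ =>
  h (LatCon.restrictS θ') hθ

lemma collapses_down {p q : ↥S × ↥S}
    (h : Collapses ((p.1 : L), (p.2 : L)) ((q.1 : L), (q.2 : L))) : Collapses p q := by
  intro θ hθ
  have h1 : (extendCon hS θ hc).rel p.1 p.2 :=
    Or.inr (Or.inr (Or.inr ⟨neS hS p.1, neS hS p.2, hθ⟩))
  have h2 := h (extendCon hS θ hc) h1
  rcases h2 with ⟨h3, _⟩ | ⟨h3, _⟩ | ⟨h3, _⟩ | ⟨_, _, h3⟩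
  · exact absurd h3 (neS hS q.1)
  · exact absurd h3 (neS hS q.1)
  · exact absurd h3 (neS hS q.2)
  · exact h3

end Sub2

section Cov
variable {L : Type u} [Lattice L] [Fintype L] {c cm cs d : L} {S : Sublattice L}
variable (hS : (S : Set L) = {x : L | x ≠ c}) (hc : Corner c cm cs d)

/-- The projection of a pair in `S` to a pair in `L`. -/
def pr (p : ↥S × ↥S) : L × L := ((p.1 : L), (p.2 : L))

lemma pr_injective : Function.Injective (pr (S := S)) := by
  intro a b h
  exact Prod.ext (Subtype.ext (congrArg Prod.fst h)) (Subtype.ext (congrArg Prod.snd h))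

lemma covS_of_covL {a b : ↥S} (h : (a : L) ⋖ (b : L)) : a ⋖ b :=
  ⟨h.lt, fun z h1 h2 => h.2 (show (a : L) < z from h1) h2⟩

include hS hc in
lemma covL_of_covS {a b : ↥S} (h : a ⋖ b) : (a : L) ⋖ (b : L) := by
  refine ⟨h.lt, fun z h1 h2 => ?_⟩
  by_cases hzc : z = c
  · subst hzc
    have h3 : (a : L) < d := lt_of_le_of_lt (hc.le_cm_of_lt h1) hc.covmd.lt
    have h4 : d < (b : L) := lt_of_lt_of_le hc.covds.lt (hc.cs_le_of_lt h2)
    exact h.2 (show a < (⟨d, memS hS hc.dnec⟩ : ↥S) from h3) h4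
  · exact h.2 (show a < (⟨z, memS hS hzc⟩ : ↥S) from h1) h2

include hS hc in
lemma card_lower_eq {t : ↥S} (ht : (t : L) ≠ cs) :
    Nat.card {z : ↥S // z ⋖ t} = Nat.card {z : L // z ⋖ (t : L)} := by
  apply Nat.card_eq_of_bijective (fun z => ⟨(z.1 : L), covL_of_covS hS hc z.2⟩)
  constructor
  · intro a b hab
    have h2 := congrArg Subtype.val hab
    exact Subtype.ext (Subtype.ext h2)
  · intro z
    have hzc : (z.1 : L) ≠ c := fun he => ht (hc.uc (t : L) (he ▸ z.2) ▸ rfl)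
    exact ⟨⟨⟨z.1, memS hS hzc⟩, covS_of_covL z.2⟩, Subtype.ext rfl⟩

variable {D : Diagram L} {D2 : Diagram ↥S}

include hS hc in
lemma swing_up (hx : ∀ a : ↥S, D2.x a = D.x (a : L)) {p q : ↥S × ↥S}
    (h : Swing D2 p q) : Swing D (pr p) (pr q) := by
  obtain ⟨h1, h2, h3, h4⟩ := h
  refine ⟨congrArg Subtype.val h1, ?_, ?_, ?_⟩
  · refine le_trans h2 (Nat.card_le_card_of_injective
      (fun z : {z : ↥S // z ⋖ p.2} => (⟨(z.1 : L), covL_of_covS hS hc z.2⟩ :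
        {z : L // z ⋖ (pr p).2})) ?_)
    intro a b hab
    have h2 := congrArg Subtype.val hab
    exact Subtype.ext (Subtype.ext h2)
  · intro hall
    apply h3
    intro z hz
    have := hall (z : L) (covL_of_covS hS hc hz)
    rw [hx q.1, hx z]
    exact this
  · intro hall
    apply h4
    intro z hz
    have := hall (z : L) (covL_of_covS hS hc hz)
    rw [hx z, hx q.1]
    exact this

include hS hc in
lemma swing_dn (hx : ∀ a : ↥S, D2.x a = D.x (a : L)) {P Q : L × L}
    (h : Swing D P Q) (hP1 : P.1 ≠ c) (hP2 : P.2 ≠ c) (hQ1 : Q.1 ≠ c) (hQ2 : Q.2 ≠ c) :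
    Swing D2 (⟨P.1, memS hS hP1⟩, ⟨P.2, memS hS hP2⟩)
      (⟨Q.1, memS hS hQ1⟩, ⟨Q.2, memS hS hQ2⟩) := by
  obtain ⟨h1, h2, h3, h4⟩ := h
  have htcs : P.2 ≠ cs := by
    intro he
    rw [he, hc.two_lcs] at h2
    omega
  have hcz : ∀ z : L, z ⋖ P.2 → z ≠ c := by
    intro z hz he
    exact htcs (hc.uc P.2 (he ▸ hz))
  refine ⟨Subtype.ext h1, ?_, ?_, ?_⟩
  · rw [card_lower_eq hS hc (t := ⟨P.2, memS hS hP2⟩) htcs]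
    exact h2
  · intro hall
    apply h3
    intro z hz
    have := hall ⟨z, memS hS (hcz z hz)⟩ (covS_of_covL hz)
    rwa [hx, hx] at this
  · intro hall
    apply h4
    intro z hz
    have := hall ⟨z, memS hS (hcz z hz)⟩ (covS_of_covL hz)
    rwa [hx, hx] at this

include hS hc in
lemma swingSeq_up (hx : ∀ a : ↥S, D2.x a = D.x (a : L)) {p q : ↥S × ↥S}
    (h : SwingSeq D2 p q) : SwingSeq D (pr p) (pr q) := by
  obtain ⟨n, r, hinj, hprime, hup, hlast, hstep⟩ := h
  refine ⟨n, fun i => pr (r i), fun i j hij => hinj (pr_injective hij), ?_, ?_, ?_, ?_⟩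
  · intro i
    exact covL_of_covS hS hc (hprime i)
  · exact ⟨congrArg Subtype.val hup.1, congrArg Subtype.val hup.2⟩
  · exact congrArg pr hlast
  · intro i
    rcases hstep i with hst | hst
    · exact Or.inl ⟨congrArg Subtype.val hst.1, congrArg Subtype.val hst.2⟩
    · exact Or.inr (swing_up hS hc hx hst)

include hS hc in
lemma swingSeq_dn_clean (hx : ∀ a : ↥S, D2.x a = D.x (a : L)) {p q : ↥S × ↥S}
    (n : ℕ) (r : Fin (n + 1) → L × L) (hinj : Function.Injective r)
    (hprime : ∀ i, IsPrimeInt (r i)) (hup : PerspUp (pr p) (r 0))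
    (hlast : r (Fin.last n) = pr q)
    (hstep : ∀ i : Fin n, PerspDn (r i.castSucc) (r i.succ) ∨ Swing D (r i.castSucc) (r i.succ))
    (hall : ∀ i, (r i).1 ≠ c ∧ (r i).2 ≠ c) : SwingSeq D2 p q := by
  refine ⟨n, fun i => (⟨(r i).1, memS hS (hall i).1⟩, ⟨(r i).2, memS hS (hall i).2⟩),
    ?_, ?_, ?_, ?_, ?_⟩
  · intro i j hij
    apply hinj
    exact Prod.ext (congrArg (Subtype.val ∘ Prod.fst) hij) (congrArg (Subtype.val ∘ Prod.snd) hij)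
  · intro i
    exact covS_of_covL (hprime i)
  · exact ⟨Subtype.ext hup.1, Subtype.ext hup.2⟩
  · exact Prod.ext (Subtype.ext (congrArg Prod.fst hlast)) (Subtype.ext (congrArg Prod.snd hlast))
  · intro i
    rcases hstep i with hst | hst
    · exact Or.inl ⟨Subtype.ext hst.1, Subtype.ext hst.2⟩
    · exact Or.inr (swing_dn hS hc hx hst (hall i.castSucc).1 (hall i.castSucc).2
        (hall i.succ).1 (hall i.succ).2)

end Cov

section Surgery
variable {L : Type u} [Lattice L] [Fintype L] {c cm cs d : L} {S : Sublattice L}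
variable (hS : (S : Set L) = {x : L | x ≠ c}) (hc : Corner c cm cs d)
variable {D : Diagram L} {D2 : Diagram ↥S}

include hS hc in
lemma swingSeq_dn (hx : ∀ a : ↥S, D2.x a = D.x (a : L)) {p q : ↥S × ↥S}
    (h : SwingSeq D (pr p) (pr q)) : SwingSeq D2 p q := by
  obtain ⟨n, r, hinj, hprime, hup, hlast, hstep⟩ := h
  have hnotA : ∀ i, r i ≠ (cm, c) := by
    intro i hi
    rcases Fin.eq_castSucc_or_eq_last i with ⟨j, rfl⟩ | rfl
    · rcases hstep j with hst | hst
      · rw [hi] at hst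
        have hs1 : cm ⊓ (r j.succ).2 = (r j.succ).1 := hst.1
        have hs2 : cm ⊔ (r j.succ).2 = c := hst.2
        by_cases hy : (r j.succ).2 = c
        · have he : r j.succ = (cm, c) := by
            have h1 : (r j.succ).1 = cm := by
              rw [← hs1, hy]
              exact inf_eq_left.2 hc.covm.le
            exact Prod.ext h1 hy
          exact absurd (hinj (hi.trans he.symm)) (Fin.castSucc_lt_succ : j.castSucc < j.succ).ne
        · exact hc.jirr hc.cmnec hy hs2
      · rw [hi] at hst
        exact hc.card_three_absurd hst.2.1 (fun z hz => hc.lc z hz)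
    · rw [hlast] at hi
      exact (neS hS q.2) (congrArg Prod.snd hi)
  have hnotB : ∀ j : Fin n, r j.succ ≠ (c, cs) := by
    intro j hj
    rcases hstep j with hst | hst
    · rw [hj] at hst
      have hs1 : (r j.castSucc).1 ⊓ cs = c := hst.1
      by_cases h1 : (r j.castSucc).1 = c
      · have he : r j.castSucc = (c, cs) := by
          refine Prod.ext h1 (hc.uc _ ?_)
          rw [← h1]
          exact hprime j.castSucc
        exact absurd (hinj (he.trans hj.symm)) (Fin.castSucc_lt_succ : j.castSucc < j.succ).ne
      · exact hc.mirr h1 hc.csnec hs1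
    · have h3 : 3 ≤ Nat.card {z : L // z ⋖ cs} := by
        have h4 := hst.2.1
        rw [hst.1, hj] at h4
        exact h4
      have h5 : Nat.card {z : L // z ⋖ cs} = 2 := hc.two_lcs
      omega
  have hgood : ∀ i, r i ≠ (c, cs) → (r i).1 ≠ c ∧ (r i).2 ≠ c := by
    intro i hi
    constructor
    · intro h1
      refine hi (Prod.ext h1 (hc.uc _ ?_))
      rw [← h1]
      exact hprime i
    · intro h2
      refine hnotA i (Prod.ext (hc.lc _ ?_) h2)
      rw [← h2]
      exact hprime i
  have hzero : ∀ i : Fin (n + 1), i ≠ 0 → (r i).1 ≠ c ∧ (r i).2 ≠ c := by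
    intro i hi
    rcases Fin.eq_zero_or_eq_succ i with rfl | ⟨j, rfl⟩
    · exact absurd rfl hi
    · exact hgood _ (hnotB j)
  by_cases hB : r 0 = (c, cs)
  · -- surgery needed
    rcases n with _ | m
    · exfalso
      have h0 : r (Fin.last 0) = r 0 := rfl
      have : ((c, cs) : L × L) = pr q := by rw [← hB, ← h0, hlast]
      exact (neS hS q.1) (congrArg Prod.fst this).symm
    have hstep0 := hstep 0
    rw [Fin.castSucc_zero, hB] at hstep0
    rcases hstep0 with hd | hsw
    swap
    · exfalso
      have h3 : 3 ≤ Nat.card {z : L // z ⋖ cs} := hsw.2.1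
      have h5 : Nat.card {z : L // z ⋖ cs} = 2 := hc.two_lcs
      omega
    have hd1 : c ⊓ (r (Fin.succ 0)).2 = (r (Fin.succ 0)).1 := hd.1
    have hd2 : c ⊔ (r (Fin.succ 0)).2 = cs := hd.2
    obtain ⟨hY1, hY2⟩ := hzero (Fin.succ 0) (Fin.succ_ne_zero 0)
    have hY2cs : (r (Fin.succ 0)).2 ≤ cs := le_sup_right.trans hd2.le
    have hY2necs : (r (Fin.succ 0)).2 ≠ cs := by
      intro he
      refine hY1 ?_
      rw [← hd1, he]
      exact inf_eq_left.2 hc.covs.le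
    have hY2led : (r (Fin.succ 0)).2 ≤ d := hc.le_d (lt_of_le_of_ne hY2cs hY2necs) hY2
    have hY2ncm : ¬ (r (Fin.succ 0)).2 ≤ cm := by
      intro hle
      exact hc.csnec (((sup_eq_left.2 (hle.trans hc.covm.le)).symm.trans hd2).symm)
    have hu1 : (p.2 : L) ⊔ c = cs := by
      have := hup.1
      rw [hB] at this
      exact this
    have hu2 : (p.1 : L) = (p.2 : L) ⊓ c := by
      have := hup.2
      rw [hB] at this
      exact this
    have hp2ne : (p.2 : L) ≠ c := neS hS p.2
    have hp1ne : (p.1 : L) ≠ c := neS hS p.1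
    have hp2cs : (p.2 : L) ≤ cs := le_sup_left.trans hu1.le
    have hp2necs : (p.2 : L) ≠ cs := by
      intro he
      refine hp1ne ?_
      rw [hu2, he]
      exact inf_eq_right.2 hc.covs.le
    have hp2led : (p.2 : L) ≤ d := hc.le_d (lt_of_le_of_ne hp2cs hp2necs) hp2ne
    have hp2ncm : ¬ (p.2 : L) ≤ cm := by
      intro hle
      exact hc.csnec (((hc.sup_c_of_le hle).symm.trans hu1).symm)
    have hBp : PerspUp (pr p) ((cm, d) : L × L) := by
      constructor
      · exact le_antisymm (sup_le hp2led hc.covmd.le)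
          (hc.d_le (right_lt_sup.2 hp2ncm) (hc.jirr hp2ne hc.cmnec))
      · show (p.1 : L) = (p.2 : L) ⊓ cm
        rw [hu2]
        exact hc.inf_c_eq hp2ne (fun hle => hp2necs (le_antisymm hp2cs hle))
    have hY1c : (r (Fin.succ 0)).1 ≤ c := by rw [← hd1]; exact inf_le_left
    have hY1Y2 : (r (Fin.succ 0)).1 ≤ (r (Fin.succ 0)).2 := by rw [← hd1]; exact inf_le_right
    have hBY : PerspDn ((cm, d) : L × L) (r (Fin.succ 0)) := by
      constructor
      · show cm ⊓ (r (Fin.succ 0)).2 = (r (Fin.succ 0)).1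
        refine le_antisymm ?_ (le_inf ((hc.le_cm_iff hY1).1 hY1c) hY1Y2)
        rw [← hd1]
        exact inf_le_inf_right _ hc.covm.le
      · show cm ⊔ (r (Fin.succ 0)).2 = d
        exact le_antisymm (sup_le hc.covmd.le hY2led)
          (hc.d_le (left_lt_sup.2 hY2ncm) (hc.jirr hc.cmnec hY2))
    by_cases hBin : ∃ j : Fin (m + 1), r j.succ = (cm, d)
    · obtain ⟨j, hj⟩ := hBin
      refine swingSeq_dn_clean hS hc hx (m + 1 - ((j : ℕ) + 1))
        (fun i => r ⟨(j : ℕ) + 1 + (i : ℕ), by have := i.isLt; have := j.isLt; omega⟩)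
        ?_ ?_ ?_ ?_ ?_ ?_
      · intro i i' hii
        have hval : (j : ℕ) + 1 + (i : ℕ) = (j : ℕ) + 1 + (i' : ℕ) :=
          congrArg Fin.val (hinj hii)
        exact Fin.ext (by omega)
      · intro i; exact hprime _
      · have he : (⟨(j : ℕ) + 1 + ((0 : Fin (m + 1 - ((j : ℕ) + 1) + 1)) : ℕ),
            by have := j.isLt; omega⟩ : Fin (m + 2)) = j.succ := Fin.ext (by simp)
        beta_reduce
        rw [he, hj]
        exact hBp
      · have he : (⟨(j : ℕ) + 1 + ((Fin.last (m + 1 - ((j : ℕ) + 1))) : ℕ),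
            by have := j.isLt; omega⟩ : Fin (m + 2)) = Fin.last (m + 1) :=
          Fin.ext (by simp [Fin.val_last]; have := j.isLt; omega)
        beta_reduce
        rw [he]
        exact hlast
      · intro i
        have hlt : (j : ℕ) + 1 + (i : ℕ) < m + 1 := by have := i.isLt; have := j.isLt; omega
        have hst := hstep ⟨(j : ℕ) + 1 + (i : ℕ), hlt⟩
        have e1 : (Fin.castSucc ⟨(j : ℕ) + 1 + (i : ℕ), hlt⟩ : Fin (m + 2)) =
            ⟨(j : ℕ) + 1 + ((Fin.castSucc i : Fin (m + 1 - ((j : ℕ) + 1) + 1)) : ℕ),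
              by have := i.isLt; have := j.isLt; omega⟩ := Fin.ext (by simp)
        have e2 : (Fin.succ ⟨(j : ℕ) + 1 + (i : ℕ), hlt⟩ : Fin (m + 2)) =
            ⟨(j : ℕ) + 1 + ((Fin.succ i : Fin (m + 1 - ((j : ℕ) + 1) + 1)) : ℕ),
              by have := i.isLt; have := j.isLt; omega⟩ := Fin.ext (by simp; omega)
        rw [e1, e2] at hst
        exact hst
      · intro i
        refine hzero _ ?_
        intro he
        have hv := congrArg Fin.val he
        simp only [Fin.val_zero] at hv
        omega
    · push_neg at hBin
      have hs : ∀ k : Fin (m + 2), k ≠ 0 →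
          (fun i => Fin.cases ((cm, d) : L × L) (fun j : Fin (m + 1) => r j.succ) i) k = r k := by
        intro k hk
        rcases Fin.eq_zero_or_eq_succ k with rfl | ⟨t, rfl⟩
        · exact absurd rfl hk
        · rfl
      refine swingSeq_dn_clean hS hc hx (m + 1)
        (fun i => Fin.cases ((cm, d) : L × L) (fun j : Fin (m + 1) => r j.succ) i)
        ?_ ?_ ?_ ?_ ?_ ?_
      · intro i i' hii
        rcases Fin.eq_zero_or_eq_succ i with rfl | ⟨t, rfl⟩ <;>
          rcases Fin.eq_zero_or_eq_succ i' with rfl | ⟨t', rfl⟩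
        · rfl
        · exact absurd (show ((cm, d) : L × L) = r t'.succ from hii).symm (hBin t')
        · exact absurd (show r t.succ = ((cm, d) : L × L) from hii) (hBin t)
        · exact hinj (show r t.succ = r t'.succ from hii)
      · intro i
        rcases Fin.eq_zero_or_eq_succ i with rfl | ⟨t, rfl⟩
        · exact hc.covmd
        · exact hprime t.succ
      · exact hBp
      · have hL : (Fin.last (m + 1)) = (Fin.last m).succ := rfl
        rw [hL]
        exact hlast
      · intro i
        rcases Fin.eq_zero_or_eq_succ i with rfl | ⟨t, rfl⟩
        · exact Or.inl hBY
        · have e1 : (Fin.castSucc (t.succ) : Fin (m + 2)) = (t.castSucc).succ :=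
            Fin.ext (by simp)
          have hst := hstep t.succ
          rw [e1] at hst
          simp only [Fin.cases_succ]
          exact hst
      · intro i
        rcases Fin.eq_zero_or_eq_succ i with rfl | ⟨t, rfl⟩
        · exact ⟨hc.cmnec, hc.dnec⟩
        · exact hzero t.succ (Fin.succ_ne_zero t)
  · refine swingSeq_dn_clean hS hc hx n r hinj hprime hup hlast hstep ?_
    intro i
    rcases Fin.eq_zero_or_eq_succ i with rfl | ⟨j, rfl⟩
    · exact hgood 0 hB
    · exact hgood _ (hnotB j)

end Surgery

end SLRC


theorem swing_lemma_remove_corner [Fintype L] (hsm : Semimodular L)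
    (hslim : Slim L) (D : Diagram L) (c : L) (hc : IsLatCorner c)
    (S : Sublattice L) (hS : (S : Set L) = {x : L | x ≠ c})
    (D2 : Diagram S) (hx : ∀ a : S, D2.x a = D.x (a : L))
    (h : SwingLemmaHolds L D) : SwingLemmaHolds S D2 := by
  obtain ⟨cm, cs, d, hcor⟩ := SLRC.corner_exists hsm hc
  intro p q hp hq hpq
  have hp' : IsPrimeInt (SLRC.pr p) := SLRC.covL_of_covS hS hcor hp
  have hq' : IsPrimeInt (SLRC.pr q) := SLRC.covL_of_covS hS hcor hq
  have hpq' : SLRC.pr p ≠ SLRC.pr q := fun he => hpq (SLRC.pr_injective he)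
  constructor
  · intro hcol
    have hcolL : Collapses (SLRC.pr p) (SLRC.pr q) := SLRC.collapses_up hcol
    have hseqL := (h (SLRC.pr p) (SLRC.pr q) hp' hq' hpq').mp hcolL
    exact SLRC.swingSeq_dn hS hcor hx hseqL
  · intro hseq
    have hseqL := SLRC.swingSeq_up hS hcor hx hseq
    have hcolL := (h (SLRC.pr p) (SLRC.pr q) hp' hq' hpq').mpr hseqL
    exact SLRC.collapses_down hS hcor hcolL
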